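/- Suppose m ≥ 2 and D ∈ Λ_m satisfies ⟨D, v⟩ ≥ 0 for each of the vectors e_1, …, e_m, s, f, f+s−e_1−e_2, f+s−e_1, f+s−e_2, and −K. Write D (uniquely) as D = a(s−f) + b(f−e_1−e_2) + Σ_{1 ≤ i < m} c_i(e_i−e_{i+1}) + c_m·e_m. Then the coefficients satisfy c_2 ≥ c_3 ≥ ⋯ ≥ c_m ≥ 0, c_2 ≥ b ≥ a ≥ 0, and c_2 ≥ c_1 ≥ 0. (In particular any nef divisor class D with D·K ≤ 0 on a rational surface with blowdown structure is a nonnegative ℤ-linear combination of the simple roots and e_m, with convexity constraints on the coefficients.) -/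

import Mathlib

/-- The basis vector `s` of the lattice `Λ_m = ℤ^{m+2}` (coordinate 0). -/
def sV (m : ℕ) : Fin (m + 2) → ℤ := fun i => if (i : ℕ) = 0 then 1 else 0

/-- The basis vector `f` of the lattice `Λ_m = ℤ^{m+2}` (coordinate 1). -/
def fV (m : ℕ) : Fin (m + 2) → ℤ := fun i => if (i : ℕ) = 1 then 1 else 0

/-- The basis vector `e_j` (for `1 ≤ j ≤ m`) of the lattice `Λ_m = ℤ^{m+2}`
(coordinate `j+1`). -/
def eV (m j : ℕ) : Fin (m + 2) → ℤ := fun i => if (i : ℕ) = j + 1 then 1 else 0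

/-- The even intersection form on `Λ_m`: `⟨s,s⟩ = 0`, `⟨s,f⟩ = 1`, `⟨f,f⟩ = 0`,
`⟨s,e_i⟩ = ⟨f,e_i⟩ = 0`, `⟨e_i,e_j⟩ = −δ_{ij}`. -/
def evenForm (m : ℕ) (u v : Fin (m + 2) → ℤ) : ℤ :=
  u 0 * v 1 + u 1 * v 0 - ∑ i : Fin (m + 2), if 2 ≤ (i : ℕ) then u i * v i else 0

/-- The canonical class `K = −2s − 2f + Σ_{i=1}^m e_i` (even case). -/
def evenK (m : ℕ) : Fin (m + 2) → ℤ :=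
  (-2 : ℤ) • sV m + (-2 : ℤ) • fV m + ∑ j ∈ Finset.Icc 1 m, eV m j

/-- The even simple roots: `σ_0 = s − f`, `σ_1 = f − e_1 − e_2`,
`σ_k = e_{k−1} − e_k` for `2 ≤ k ≤ m`. -/
def evenRoot (m k : ℕ) : Fin (m + 2) → ℤ :=
  if k = 0 then sV m - fV m
  else if k = 1 then fV m - eV m 1 - eV m 2
  else eV m (k - 1) - eV m k

-- L1: extraction
lemma L1 (m j : ℕ) (h1 : 1 ≤ j) (h2 : j ≤ m) (u : Fin (m+2) → ℤ) :
    ∑ i : Fin (m + 2), (if 2 ≤ (i : ℕ) then u i * (if (i : ℕ) = j + 1 then (1:ℤ) else 0) else 0)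
      = u ⟨j+1, by omega⟩ := by
  rw [Finset.sum_eq_single_of_mem (⟨j+1, by omega⟩ : Fin (m+2)) (Finset.mem_univ _)]
  · simp [show 2 ≤ j + 1 by omega]
  · rintro ⟨k, hk⟩ - hne
    have : k ≠ j + 1 := by simpa [Fin.ext_iff] using hne
    simp [this]

lemma form_sV (m : ℕ) (u : Fin (m+2) → ℤ) : evenForm m u (sV m) = u 1 := by
  unfold evenForm sV
  rw [Finset.sum_eq_zero (fun i _ => by rcases i with ⟨k,hk⟩; simp; omega)]
  simp [Fin.val_one]

lemma form_fV (m : ℕ) (u : Fin (m+2) → ℤ) : evenForm m u (fV m) = u 0 := by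
  unfold evenForm fV
  rw [Finset.sum_eq_zero (fun i _ => by rcases i with ⟨k,hk⟩; simp; omega)]
  simp [Fin.val_one]

lemma form_eV (m j : ℕ) (h1 : 1 ≤ j) (h2 : j ≤ m) (u : Fin (m+2) → ℤ) :
    evenForm m u (eV m j) = -u ⟨j+1, by omega⟩ := by
  unfold evenForm eV
  rw [L1 m j h1 h2]
  simp [Fin.val_one, show (1:ℕ) ≠ j + 1 by omega, show j ≠ 0 by omega]

lemma form_add (m : ℕ) (u v w : Fin (m+2) → ℤ) :
    evenForm m u (v + w) = evenForm m u v + evenForm m u w := by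
  unfold evenForm
  rw [show (∑ i : Fin (m + 2), if 2 ≤ (i : ℕ) then u i * (v + w) i else 0)
      = (∑ i : Fin (m + 2), if 2 ≤ (i : ℕ) then u i * v i else 0)
        + (∑ i : Fin (m + 2), if 2 ≤ (i : ℕ) then u i * w i else 0) by
    rw [← Finset.sum_add_distrib]
    exact Finset.sum_congr rfl (fun i _ => by simp only [Pi.add_apply]; split <;> ring)]
  simp [Pi.add_apply]; ring

lemma form_sub (m : ℕ) (u v w : Fin (m+2) → ℤ) :
    evenForm m u (v - w) = evenForm m u v - evenForm m u w := by
  unfold evenForm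
  rw [show (∑ i : Fin (m + 2), if 2 ≤ (i : ℕ) then u i * (v - w) i else 0)
      = (∑ i : Fin (m + 2), if 2 ≤ (i : ℕ) then u i * v i else 0)
        - (∑ i : Fin (m + 2), if 2 ≤ (i : ℕ) then u i * w i else 0) by
    rw [← Finset.sum_sub_distrib]
    exact Finset.sum_congr rfl (fun i _ => by simp only [Pi.sub_apply]; split <;> ring)]
  simp [Pi.sub_apply]; ring

lemma D_coord (m : ℕ) (hm : 2 ≤ m) (a b : ℤ) (c : ℕ → ℤ) (j : ℕ) (h1 : 1 ≤ j) (h2 : j ≤ m) :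
    (a • (sV m - fV m) + b • (fV m - eV m 1 - eV m 2) +
      (∑ i ∈ Finset.Ico 1 m, c i • (eV m i - eV m (i + 1))) + c m • eV m m) ⟨j+1, by omega⟩
    = (if j ≤ 2 then -b else 0) + c j - (if 2 ≤ j then c (j-1) else 0) := by
  simp only [Pi.add_apply, Pi.smul_apply, Pi.sub_apply, Finset.sum_apply, smul_eq_mul]
  unfold sV fV eV
  simp only [Fin.val_mk]
  have hsum : ∑ i ∈ Finset.Ico 1 m,
      c i * ((if j + 1 = i + 1 then (1:ℤ) else 0) - (if j + 1 = i + 1 + 1 then (1:ℤ) else 0))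
      = (if j < m then c j else 0) - (if 2 ≤ j then c (j-1) else 0) := by
    rw [Finset.sum_congr rfl (fun i (_ : i ∈ Finset.Ico 1 m) =>
      show c i * ((if j + 1 = i + 1 then (1:ℤ) else 0) - (if j + 1 = i + 1 + 1 then (1:ℤ) else 0))
        = (if j + 1 = i + 1 then c i else 0) - (if j + 1 = i + 2 then c i else 0)
      from by split_ifs <;> ring)]
    rw [Finset.sum_sub_distrib]
    congr 1
    · by_cases hj : j < m
      · rw [Finset.sum_eq_single_of_mem j (by simp only [Finset.mem_Ico]; omega)
          (fun i _ hne => by rw [if_neg (by omega)])]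
        rw [if_pos rfl, if_pos hj]
      · rw [Finset.sum_eq_zero (fun i hi => by
          rw [if_neg (by simp only [Finset.mem_Ico] at hi; omega)]), if_neg hj]
    · by_cases hj : 2 ≤ j
      · rw [Finset.sum_eq_single_of_mem (j-1) (by simp only [Finset.mem_Ico]; omega)
          (fun i _ hne => by rw [if_neg (by omega)])]
        rw [if_pos (by omega), if_pos hj]
      · rw [Finset.sum_eq_zero (fun i hi => by
          rw [if_neg (by simp only [Finset.mem_Ico] at hi; omega)]), if_neg hj]
  rw [hsum]
  rw [if_neg (by omega : ¬ j + 1 = 0), if_neg (by omega : ¬ j + 1 = 1)]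
  by_cases hjm : j = m
  · subst hjm
    rw [if_pos rfl, if_neg (by omega : ¬ (j < j))]
    rcases (by omega : j = 2 ∨ 3 ≤ j) with h | h
    · subst h; norm_num; ring
    · rw [if_neg (by omega : ¬ j + 1 = 1 + 1), if_neg (by omega : ¬ j + 1 = 2 + 1),
        if_neg (by omega : ¬ j ≤ 2), if_pos (by omega : 2 ≤ j)]
      ring
  · rw [if_neg (by omega : ¬ j + 1 = m + 1), if_pos (by omega : j < m)]
    rcases (by omega : j = 1 ∨ j = 2 ∨ 3 ≤ j) with h | h | h
    · subst h; norm_num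
    · subst h; norm_num; ring
    · rw [if_neg (by omega : ¬ j + 1 = 1 + 1), if_neg (by omega : ¬ j + 1 = 2 + 1),
        if_neg (by omega : ¬ j ≤ 2), if_pos (by omega : 2 ≤ j)]
      ring

def gTail (m : ℕ) (u : Fin (m + 2) → ℤ) : ℤ :=
  ∑ i : Fin (m + 2), if 2 ≤ (i : ℕ) then u i else 0

lemma gTail_add (m : ℕ) (u v : Fin (m+2) → ℤ) : gTail m (u + v) = gTail m u + gTail m v := by
  unfold gTail
  rw [← Finset.sum_add_distrib]
  exact Finset.sum_congr rfl (fun i _ => by simp only [Pi.add_apply]; split <;> simp)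

lemma gTail_sub (m : ℕ) (u v : Fin (m+2) → ℤ) : gTail m (u - v) = gTail m u - gTail m v := by
  unfold gTail
  rw [← Finset.sum_sub_distrib]
  exact Finset.sum_congr rfl (fun i _ => by simp only [Pi.sub_apply]; split <;> simp)

lemma gTail_smul (m : ℕ) (z : ℤ) (u : Fin (m+2) → ℤ) : gTail m (z • u) = z * gTail m u := by
  unfold gTail
  rw [Finset.mul_sum]
  exact Finset.sum_congr rfl (fun i _ => by simp only [Pi.smul_apply, smul_eq_mul]; split <;> simp)

lemma gTail_sum (m : ℕ) (T : Finset ℕ) (v : ℕ → Fin (m+2) → ℤ) :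
    gTail m (∑ x ∈ T, v x) = ∑ x ∈ T, gTail m (v x) := by
  induction T using Finset.cons_induction with
  | empty => simp [gTail]
  | cons x T hx ih => rw [Finset.sum_cons, Finset.sum_cons, gTail_add, ih]

lemma gTail_sV (m : ℕ) : gTail m (sV m) = 0 := by
  unfold gTail sV
  exact Finset.sum_eq_zero (fun i _ => by rcases i with ⟨k, hk⟩; simp; omega)

lemma gTail_fV (m : ℕ) : gTail m (fV m) = 0 := by
  unfold gTail fV
  exact Finset.sum_eq_zero (fun i _ => by rcases i with ⟨k, hk⟩; simp; omega)

lemma gTail_eV (m j : ℕ) (h1 : 1 ≤ j) (h2 : j ≤ m) : gTail m (eV m j) = 1 := by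
  unfold gTail eV
  have := L1 m j h1 h2 (fun _ => 1)
  simpa using this

lemma K_coord (m : ℕ) (x : Fin (m+2)) : evenK m x = if 2 ≤ (x:ℕ) then 1 else -2 := by
  unfold evenK sV fV eV
  simp only [Pi.add_apply, Pi.smul_apply, smul_eq_mul, Finset.sum_apply]
  rcases x with ⟨k, hk⟩
  simp only [Fin.val_mk]
  by_cases h : 2 ≤ k
  · rw [Finset.sum_eq_single_of_mem (k-1) (by simp only [Finset.mem_Icc]; omega)
      (fun i _ hne => by rw [if_neg (by omega)])]
    rw [if_neg (show ¬ k = 0 by omega), if_neg (show ¬ k = 1 by omega),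
      if_pos (show k = k - 1 + 1 by omega), if_pos h]
    ring
  · rw [Finset.sum_eq_zero (fun i hi => by
      rw [if_neg (by simp only [Finset.mem_Icc] at hi; omega)]), if_neg h]
    rcases (by omega : k = 0 ∨ k = 1) with h' | h' <;> subst h' <;> norm_num

lemma form_negK (m : ℕ) (u : Fin (m + 2) → ℤ) :
    evenForm m u (-evenK m) = 2 * u 0 + 2 * u 1 + gTail m u := by
  unfold evenForm gTail
  rw [Finset.sum_congr rfl (fun i (_ : i ∈ (Finset.univ : Finset (Fin (m+2)))) =>
    show (if 2 ≤ (i:ℕ) then u i * (-evenK m) i else 0) = -(if 2 ≤ (i:ℕ) then u i else 0) from by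
      rw [Pi.neg_apply, K_coord]
      split_ifs with h
      · ring
      · simp)]
  rw [Finset.sum_neg_distrib]
  rw [Pi.neg_apply, Pi.neg_apply, K_coord, K_coord]
  norm_num [Fin.val_one]
  ring


set_option maxHeartbeats 2000000 in
/-- For `m ≥ 2`, suppose `D ∈ Λ_m` pairs nonnegatively with each of the vectors
`e_1, …, e_m`, `s`, `f`, `f+s−e_1−e_2`, `f+s−e_1`, `f+s−e_2`, and `−K`.  Write `D`
(uniquely) as `D = a(s−f) + b(f−e_1−e_2) + Σ_{1 ≤ i < m} c_i(e_i−e_{i+1}) + c_m·e_m`.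
Then `c_2 ≥ c_3 ≥ ⋯ ≥ c_m ≥ 0`, `c_2 ≥ b ≥ a ≥ 0`, and `c_2 ≥ c_1 ≥ 0`. -/
theorem nef_class_nonneg_root_coefficients (m : ℕ) (hm : 2 ≤ m)
    (D : Fin (m + 2) → ℤ)
    (he : ∀ i, 1 ≤ i → i ≤ m → 0 ≤ evenForm m D (eV m i))
    (hs : 0 ≤ evenForm m D (sV m))
    (hf : 0 ≤ evenForm m D (fV m))
    (hfs12 : 0 ≤ evenForm m D (fV m + sV m - eV m 1 - eV m 2))
    (hfs1 : 0 ≤ evenForm m D (fV m + sV m - eV m 1))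
    (hfs2 : 0 ≤ evenForm m D (fV m + sV m - eV m 2))
    (hK : 0 ≤ evenForm m D (-evenK m))
    (a b : ℤ) (c : ℕ → ℤ)
    (hD : D = a • (sV m - fV m) + b • (fV m - eV m 1 - eV m 2) +
        (∑ i ∈ Finset.Ico 1 m, c i • (eV m i - eV m (i + 1))) + c m • eV m m) :
    (∀ i, 2 ≤ i → i < m → c (i + 1) ≤ c i) ∧ 0 ≤ c m ∧
      b ≤ c 2 ∧ a ≤ b ∧ 0 ≤ a ∧ c 1 ≤ c 2 ∧ 0 ≤ c 1 := by
  have hD0 : D 0 = a := by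
    rw [hD]
    simp only [Pi.add_apply, Pi.smul_apply, Pi.sub_apply, Finset.sum_apply, smul_eq_mul]
    unfold sV fV eV
    simp [Fin.val_zero]
  have hD1 : D 1 = -a + b := by
    rw [hD]
    simp only [Pi.add_apply, Pi.smul_apply, Pi.sub_apply, Finset.sum_apply, smul_eq_mul]
    unfold sV fV eV
    simp [Fin.val_one, show (1:ℕ) ≠ m + 1 by omega, show m ≠ 0 by omega]
  have V : ∀ j (h1 : 1 ≤ j) (h2 : j ≤ m), D ⟨j+1, by omega⟩ =
      (if j ≤ 2 then -b else 0) + c j - (if 2 ≤ j then c (j-1) else 0) := by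
    intro j h1 h2
    rw [hD]
    exact D_coord m hm a b c j h1 h2
  have V1 := V 1 (le_refl 1) (by omega)
  have V2 := V 2 (by omega) hm
  norm_num at V1 V2
  have hS : ∑ i ∈ Finset.Ico 1 m, gTail m (c i • (eV m i - eV m (i+1))) = 0 :=
    Finset.sum_eq_zero (fun i hi => by
      rw [Finset.mem_Ico] at hi
      rw [gTail_smul, gTail_sub, gTail_eV m i hi.1 (by omega),
        gTail_eV m (i+1) (by omega) (by omega)]
      ring)
  have hG : gTail m D = -2*b + c m := by
    rw [hD, gTail_add, gTail_add, gTail_add, gTail_sum, hS, gTail_smul, gTail_smul,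
      gTail_smul, gTail_sub, gTail_sub, gTail_sub, gTail_sV, gTail_fV,
      gTail_eV m 1 (by omega) (by omega), gTail_eV m 2 (by omega) hm,
      gTail_eV m m (by omega) (le_refl m)]
    ring
  rw [form_fV, hD0] at hf
  rw [form_sV, hD1] at hs
  rw [form_sub, form_add, form_fV, form_sV, form_eV m 1 (le_refl 1) (by omega),
    hD0, hD1, V1] at hfs1
  rw [form_sub, form_add, form_fV, form_sV, form_eV m 2 (by omega) hm,
    hD0, hD1, V2] at hfs2
  rw [form_sub, form_sub, form_add, form_fV, form_sV, form_eV m 1 (le_refl 1) (by omega),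
    form_eV m 2 (by omega) hm, hD0, hD1, V1, V2] at hfs12
  rw [form_negK, hD0, hD1, hG] at hK
  refine ⟨?_, by linarith, by linarith, by linarith, by linarith, by linarith, by linarith⟩
  intro i h2i him
  have h := he (i+1) (by omega) (by omega)
  rw [form_eV m (i+1) (by omega) (by omega), V (i+1) (by omega) (by omega),
    if_neg (show ¬ i + 1 ≤ 2 by omega), if_pos (show 2 ≤ i + 1 by omega)] at h
  simp only [Nat.add_sub_cancel] at h
  linarith
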